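/- Fix a nonempty finite index set of cardinality n and let M be the algebra of n×n complex matrices with normalized trace τ(A) = Tr(A)/n. Let x, y ∈ M be positive semidefinite. Then η(τ(x+y)) − τ(η(x+y)) ≤ (η(τ(x)) − τ(η(x))) + (η(τ(y)) − τ(η(y))). -/

import Mathlib

open scoped ComplexOrder

/-- The entropy function `η(t) = −t log t` (with `η(0) = 0`). -/
noncomputable def eta (t : ℝ) : ℝ := -(t * Real.log t)

/-- The normalized trace `τ(A) = Tr(A)/n`, as a real number. -/
noncomputable def tauR {n : Type*} [Fintype n] [DecidableEq n] (A : Matrix n n ℂ) : ℝ :=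
  (A.trace).re / (Fintype.card n)

/-- `τ(η(A))` for a Hermitian matrix `A`: `(1/n)·∑ η(λ_l)` over the eigenvalues of `A`
(junk value `0` for non-Hermitian matrices). -/
noncomputable def tauEta {n : Type*} [Fintype n] [DecidableEq n] (A : Matrix n n ℂ) : ℝ :=
  if hA : A.IsHermitian then (∑ i, eta (hA.eigenvalues i)) / (Fintype.card n) else 0

open Finset Matrix

lemma eta_eq_negMulLog : eta = Real.negMulLog := by
  funext t; simp [eta, Real.negMulLog, neg_mul]

lemma scalar_klein {t u : ℝ} (ht : 0 ≤ t) (hu : 0 < u) :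
    t - u ≤ t * Real.log t - t * Real.log u := by
  rcases eq_or_lt_of_le ht with h | h
  · simp [← h]; linarith
  · have h1 : Real.log (u / t) ≤ u / t - 1 := Real.log_le_sub_one_of_pos (by positivity)
    have h2 : Real.log (u / t) = Real.log u - Real.log t := Real.log_div (ne_of_gt hu) (ne_of_gt h)
    have h3 := mul_le_mul_of_nonneg_left h1 (le_of_lt h)
    rw [h2] at h3
    have h4 : t * (u / t - 1) = u - t := by field_simp
    nlinarith

lemma eta_div {t N : ℝ} (ht : 0 ≤ t) (hN : 0 < N) :
    eta (t / N) = (t * Real.log N - t * Real.log t) / N := by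
  rcases eq_or_lt_of_le ht with h | h
  · simp [← h, eta]
  · rw [eta, Real.log_div (ne_of_gt h) (ne_of_gt hN)]
    field_simp
    ring

lemma jensen_ds {n : Type*} [Fintype n] (lam : n → ℝ) (hlam : ∀ i, 0 ≤ lam i)
    (p : n → n → ℝ) (hp0 : ∀ i j, 0 ≤ p i j)
    (hrow : ∀ i, ∑ j, p i j = 1) (hcol : ∀ j, ∑ i, p i j = 1) :
    ∑ i, eta (lam i) ≤ ∑ j, eta (∑ i, p i j * lam i) := by
  have key : ∀ j, ∑ i, p i j * eta (lam i) ≤ eta (∑ i, p i j * lam i) := by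
    intro j
    have := Real.concaveOn_negMulLog.le_map_sum (t := Finset.univ)
      (w := fun i => p i j) (p := lam) (fun i _ => hp0 i j) (hcol j)
      (fun i _ => Set.mem_Ici.mpr (hlam i))
    simpa [eta_eq_negMulLog, smul_eq_mul] using this
  calc ∑ i, eta (lam i) = ∑ i, (∑ j, p i j) * eta (lam i) := by
        refine Finset.sum_congr rfl fun i _ => ?_
        rw [hrow i, one_mul]
    _ = ∑ i, ∑ j, p i j * eta (lam i) := by
        refine Finset.sum_congr rfl fun i _ => ?_
        rw [Finset.sum_mul]
    _ = ∑ j, ∑ i, p i j * eta (lam i) := Finset.sum_comm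
    _ ≤ ∑ j, eta (∑ i, p i j * lam i) := Finset.sum_le_sum fun j _ => key j

lemma logsum {n : Type*} [Fintype n] (w v : n → ℝ) (hw : ∀ j, 0 ≤ w j)
    (hwv : ∀ j, w j ≤ v j) (hA : 0 < ∑ j, w j) :
    (∑ j, w j) * Real.log (∑ j, w j) - (∑ j, w j) * Real.log (∑ j, v j)
      ≤ ∑ j, (w j * Real.log (w j) - w j * Real.log (v j)) := by
  set A := ∑ j, w j with hAdef
  set S := ∑ j, v j with hSdef
  have hS : 0 < S := lt_of_lt_of_le hA (Finset.sum_le_sum fun j _ => hwv j)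
  set c := A / S with hc
  have hc0 : 0 < c := div_pos hA hS
  have term : ∀ j, w j - c * v j + w j * Real.log c
      ≤ w j * Real.log (w j) - w j * Real.log (v j) := by
    intro j
    rcases eq_or_lt_of_le (le_trans (hw j) (hwv j)) with h0 | h0
    · have hwj : w j = 0 := le_antisymm (h0 ▸ hwv j) (hw j)
      simp [hwj, ← h0]
    · have hk := scalar_klein (hw j) (mul_pos hc0 h0)
      rw [Real.log_mul (ne_of_gt hc0) (ne_of_gt h0), mul_add] at hk
      linarith
  have hsum := Finset.sum_le_sum fun j (_ : j ∈ Finset.univ) => term j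
  have hleft : ∑ j, (w j - c * v j + w j * Real.log c)
      = A - c * S + A * Real.log c := by
    rw [Finset.sum_add_distrib, Finset.sum_sub_distrib, ← Finset.mul_sum,
      ← Finset.sum_mul, ← hAdef, ← hSdef, mul_comm c S, mul_comm S c]
  have hcS : c * S = A := div_mul_cancel₀ A (ne_of_gt hS)
  have hlogc : Real.log c = Real.log A - Real.log S :=
    Real.log_div (ne_of_gt hA) (ne_of_gt hS)
  calc A * Real.log A - A * Real.log S = A - c * S + A * Real.log c := by
        rw [hlogc, hcS]; ring
    _ ≤ _ := hleft ▸ hsum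

lemma sum_eigenvalues_eq_trace_re {n : Type*} [Fintype n] [DecidableEq n]
    {A : Matrix n n ℂ} (hA : A.IsHermitian) :
    ∑ i, hA.eigenvalues i = A.trace.re := by
  have h : A.trace = (Matrix.diagonal ((↑) ∘ hA.eigenvalues) : Matrix n n ℂ).trace := by
    conv_lhs => rw [hA.spectral_theorem, Unitary.conjStarAlgAut_apply]
    rw [Matrix.trace_mul_cycle,
      (Matrix.mem_unitaryGroup_iff').mp hA.eigenvectorUnitary.2, Matrix.one_mul]
    rfl
  rw [h, Matrix.trace_diagonal]
  rw [Complex.re_sum]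
  simp

lemma rowsum_normSq {n : Type*} [Fintype n] [DecidableEq n]
    {V : Matrix n n ℂ} (h : V * star V = 1) (i : n) :
    ∑ j, Complex.normSq (V i j) = 1 := by
  have : ((V * star V) i i) = ((∑ j, Complex.normSq (V i j) : ℝ) : ℂ) := by
    rw [Matrix.mul_apply]
    rw [Complex.ofReal_sum]
    refine Finset.sum_congr rfl fun j _ => ?_
    simp [Matrix.star_apply, Complex.mul_conj]
  rw [h] at this
  simp only [Matrix.one_apply_eq] at this
  exact_mod_cast this.symm

lemma colsum_normSq {n : Type*} [Fintype n] [DecidableEq n]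
    {V : Matrix n n ℂ} (h : star V * V = 1) (j : n) :
    ∑ i, Complex.normSq (V i j) = 1 := by
  have : ((star V * V) j j) = ((∑ i, Complex.normSq (V i j) : ℝ) : ℂ) := by
    rw [Matrix.mul_apply]
    rw [Complex.ofReal_sum]
    refine Finset.sum_congr rfl fun i _ => ?_
    simp [Matrix.star_apply, mul_comm, Complex.mul_conj]
  rw [h] at this
  simp only [Matrix.one_apply_eq] at this
  exact_mod_cast this.symm

lemma conj_diag_eq {n : Type*} [Fintype n] [DecidableEq n]
    {x : Matrix n n ℂ} (hx : x.IsHermitian) (W : Matrix.unitaryGroup n ℂ) (j : n) :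
    (star (W : Matrix n n ℂ) * x * (W : Matrix n n ℂ)) j j =
      ((∑ i, Complex.normSq ((star (hx.eigenvectorUnitary : Matrix n n ℂ) * (W : Matrix n n ℂ)) i j)
        * hx.eigenvalues i : ℝ) : ℂ) := by
  set U := (hx.eigenvectorUnitary : Matrix n n ℂ)
  set V := star U * (W : Matrix n n ℂ) with hV
  have hsplit : star (W : Matrix n n ℂ) * x * (W : Matrix n n ℂ)
      = star V * Matrix.diagonal ((↑) ∘ hx.eigenvalues) * V := by
    conv_lhs => rw [hx.spectral_theorem, Unitary.conjStarAlgAut_apply]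
    simp only [hV, StarMul.star_mul, star_star]
    noncomm_ring
  rw [hsplit, Matrix.mul_assoc, Matrix.mul_apply, Complex.ofReal_sum]
  refine Finset.sum_congr rfl fun i _ => ?_
  rw [Matrix.diagonal_mul, Matrix.star_apply]
  simp only [Function.comp_apply, Complex.star_def]
  rw [show (starRingEnd ℂ) (V i j) * (((hx.eigenvalues i : ℝ) : ℂ) * V i j)
      = ((Complex.normSq (V i j) : ℝ) : ℂ) * ((hx.eigenvalues i : ℝ) : ℂ) from by
    rw [Complex.normSq_eq_conj_mul_self]; ring]
  push_cast
  ring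

lemma psd_eq_zero_of_sum_eig {n : Type*} [Fintype n] [DecidableEq n]
    {A : Matrix n n ℂ} (hA : A.PosSemidef) (h : ∑ i, hA.1.eigenvalues i = 0) : A = 0 := by
  have h0 : ∀ i, hA.1.eigenvalues i = 0 := by
    intro i
    exact (Finset.sum_eq_zero_iff_of_nonneg
      (fun i _ => hA.eigenvalues_nonneg i)).mp h i (Finset.mem_univ i)
  rw [hA.1.spectral_theorem]
  have hz : (RCLike.ofReal ∘ hA.1.eigenvalues : n → ℂ) = fun _ => 0 :=
    funext fun i => by simp [Function.comp, h0 i]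
  rw [hz]
  simp

lemma tauR_zero {n : Type*} [Fintype n] [DecidableEq n] : tauR (0 : Matrix n n ℂ) = 0 := by
  simp [tauR]

lemma tauEta_zero {n : Type*} [Fintype n] [DecidableEq n] : tauEta (0 : Matrix n n ℂ) = 0 := by
  have hH : (0 : Matrix n n ℂ).IsHermitian := isHermitian_zero
  unfold tauEta
  rw [dif_pos hH]
  have hsum : ∑ i, hH.eigenvalues i = 0 := by
    rw [sum_eigenvalues_eq_trace_re hH]; simp
  have h0 : ∀ i, hH.eigenvalues i = 0 := by
    intro i
    exact (Finset.sum_eq_zero_iff_of_nonneg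
      (fun i _ => (Matrix.PosSemidef.zero (n := n) (R := ℂ)).eigenvalues_nonneg i)).mp hsum
        i (Finset.mem_univ i)
  have : ∀ i, eta (hH.eigenvalues i) = 0 := fun i => by rw [h0 i]; simp [eta]
  rw [Finset.sum_congr rfl fun i _ => this i]
  simp

theorem entropy_defect_subadditive {n : Type*} [Fintype n] [DecidableEq n] [Nonempty n]
    (x y : Matrix n n ℂ) (hx : x.PosSemidef) (hy : y.PosSemidef) :
    eta (tauR (x + y)) - tauEta (x + y) ≤
      (eta (tauR x) - tauEta x) + (eta (tauR y) - tauEta y) := by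
  classical
  have hm : (x + y).PosSemidef := hx.add hy
  set lam := hx.1.eigenvalues with hlamdef
  set mu := hy.1.eigenvalues with hmudef
  set nu := hm.1.eigenvalues with hnudef
  have hlam0 : ∀ i, 0 ≤ lam i := hx.eigenvalues_nonneg
  have hmu0 : ∀ i, 0 ≤ mu i := hy.eigenvalues_nonneg
  set A := ∑ i, lam i with hAdef
  set B := ∑ i, mu i with hBdef
  set S := ∑ i, nu i with hSdef
  have hS : S = A + B := by
    rw [hSdef, hAdef, hBdef, sum_eigenvalues_eq_trace_re, sum_eigenvalues_eq_trace_re,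
      sum_eigenvalues_eq_trace_re, Matrix.trace_add, Complex.add_re]
  rcases eq_or_lt_of_le (Finset.sum_nonneg fun i _ => hlam0 i : (0:ℝ) ≤ A) with hA0 | hA0
  · have hx0 : x = 0 := psd_eq_zero_of_sum_eig hx hA0.symm
    rw [hx0, zero_add, tauR_zero, tauEta_zero]
    simp [eta]
  rcases eq_or_lt_of_le (Finset.sum_nonneg fun i _ => hmu0 i : (0:ℝ) ≤ B) with hB0 | hB0
  · have hy0 : y = 0 := psd_eq_zero_of_sum_eig hy hB0.symm
    rw [hy0, add_zero, tauR_zero, tauEta_zero]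
    simp [eta]
  have hS0 : 0 < S := by rw [hS]; linarith
  -- the unitaries
  set Uc := (hm.1.eigenvectorUnitary : Matrix n n ℂ) with hUcdef
  set Wx : Matrix.unitaryGroup n ℂ := star hx.1.eigenvectorUnitary * hm.1.eigenvectorUnitary
    with hWxdef
  set Wy : Matrix.unitaryGroup n ℂ := star hy.1.eigenvectorUnitary * hm.1.eigenvectorUnitary
    with hWydef
  have hWxc : (Wx : Matrix n n ℂ)
      = star (hx.1.eigenvectorUnitary : Matrix n n ℂ) * Uc := rfl
  have hWyc : (Wy : Matrix n n ℂ)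
      = star (hy.1.eigenvectorUnitary : Matrix n n ℂ) * Uc := rfl
  set p : n → n → ℝ := fun i j => Complex.normSq ((Wx : Matrix n n ℂ) i j) with hpdef
  set q : n → n → ℝ := fun i j => Complex.normSq ((Wy : Matrix n n ℂ) i j) with hqdef
  have hp0 : ∀ i j, 0 ≤ p i j := fun i j => Complex.normSq_nonneg _
  have hq0 : ∀ i j, 0 ≤ q i j := fun i j => Complex.normSq_nonneg _
  have hprow : ∀ i, ∑ j, p i j = 1 := fun i =>
    rowsum_normSq ((Matrix.mem_unitaryGroup_iff).mp Wx.2) i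
  have hpcol : ∀ j, ∑ i, p i j = 1 := fun j =>
    colsum_normSq ((Matrix.mem_unitaryGroup_iff').mp Wx.2) j
  have hqrow : ∀ i, ∑ j, q i j = 1 := fun i =>
    rowsum_normSq ((Matrix.mem_unitaryGroup_iff).mp Wy.2) i
  have hqcol : ∀ j, ∑ i, q i j = 1 := fun j =>
    colsum_normSq ((Matrix.mem_unitaryGroup_iff').mp Wy.2) j
  set wx : n → ℝ := fun j => ∑ i, p i j * lam i with hwxdef
  set wy : n → ℝ := fun j => ∑ i, q i j * mu i with hwydef
  have hdx : ∀ j, (star Uc * x * Uc) j j = ((wx j : ℝ) : ℂ) := by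
    intro j
    have := conj_diag_eq hx.1 hm.1.eigenvectorUnitary j
    rw [← hWxc] at this
    exact this
  have hdy : ∀ j, (star Uc * y * Uc) j j = ((wy j : ℝ) : ℂ) := by
    intro j
    have := conj_diag_eq hy.1 hm.1.eigenvectorUnitary j
    rw [← hWyc] at this
    exact this
  have hsum_w : ∀ j, wx j + wy j = nu j := by
    intro j
    have hdm : star Uc * (x + y) * Uc = Matrix.diagonal (RCLike.ofReal ∘ nu) :=
      by simpa only [Unitary.conjStarAlgAut_apply, Unitary.coe_star, star_star] using
          hm.1.conjStarAlgAut_star_eigenvectorUnitary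
    have hsplit : star Uc * (x + y) * Uc = star Uc * x * Uc + star Uc * y * Uc := by
      noncomm_ring
    have := congrArg (fun M => M j j) (hsplit.symm.trans hdm)
    simp only [Matrix.add_apply, Matrix.diagonal_apply_eq, Function.comp_apply] at this
    rw [hdx j, hdy j] at this
    have h2 := congrArg Complex.re this
    simpa using h2
  have hwx0 : ∀ j, 0 ≤ wx j := fun j =>
    Finset.sum_nonneg fun i _ => mul_nonneg (hp0 i j) (hlam0 i)
  have hwy0 : ∀ j, 0 ≤ wy j := fun j =>
    Finset.sum_nonneg fun i _ => mul_nonneg (hq0 i j) (hmu0 i)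
  have hwxnu : ∀ j, wx j ≤ nu j := fun j => by
    have := hsum_w j; have := hwy0 j; linarith
  have hwynu : ∀ j, wy j ≤ nu j := fun j => by
    have := hsum_w j; have := hwx0 j; linarith
  have hsumwx : ∑ j, wx j = A := by
    rw [hwxdef, Finset.sum_comm]
    calc ∑ i, ∑ j, p i j * lam i = ∑ i, (∑ j, p i j) * lam i := by
          refine Finset.sum_congr rfl fun i _ => ?_; rw [Finset.sum_mul]
      _ = A := by rw [hAdef]; exact Finset.sum_congr rfl fun i _ => by rw [hprow i, one_mul]
  have hsumwy : ∑ j, wy j = B := by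
    rw [hwydef, Finset.sum_comm]
    calc ∑ i, ∑ j, q i j * mu i = ∑ i, (∑ j, q i j) * mu i := by
          refine Finset.sum_congr rfl fun i _ => ?_; rw [Finset.sum_mul]
      _ = B := by rw [hBdef]; exact Finset.sum_congr rfl fun i _ => by rw [hqrow i, one_mul]
  -- Jensen
  have jx : ∑ i, eta (lam i) ≤ ∑ j, eta (wx j) := jensen_ds lam hlam0 p hp0 hprow hpcol
  have jy : ∑ i, eta (mu i) ≤ ∑ j, eta (wy j) := jensen_ds mu hmu0 q hq0 hqrow hqcol
  -- log sum
  have lx := logsum wx nu hwx0 hwxnu (by rw [hsumwx]; exact hA0)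
  have ly := logsum wy nu hwy0 hwynu (by rw [hsumwy]; exact hB0)
  rw [hsumwx, ← hSdef] at lx
  rw [hsumwy, ← hSdef] at ly
  -- pieces
  set Lx := ∑ j, wx j * Real.log (nu j) with hLx
  set Ly := ∑ j, wy j * Real.log (nu j) with hLy
  have lx' : A * Real.log A - A * Real.log S ≤ (∑ j, wx j * Real.log (wx j)) - Lx := by
    rw [hLx, ← Finset.sum_sub_distrib]; exact lx
  have ly' : B * Real.log B - B * Real.log S ≤ (∑ j, wy j * Real.log (wy j)) - Ly := by
    rw [hLy, ← Finset.sum_sub_distrib]; exact ly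
  have hex : ∑ j, eta (wx j) = -∑ j, wx j * Real.log (wx j) := by
    simp [eta, Finset.sum_neg_distrib]
  have hey : ∑ j, eta (wy j) = -∑ j, wy j * Real.log (wy j) := by
    simp [eta, Finset.sum_neg_distrib]
  have hLxy : Lx + Ly = -∑ i, eta (nu i) := by
    rw [hLx, hLy, ← Finset.sum_add_distrib]
    rw [show -∑ i, eta (nu i) = ∑ i, nu i * Real.log (nu i) by simp [eta, Finset.sum_neg_distrib]]
    refine Finset.sum_congr rfl fun j _ => ?_
    rw [← hsum_w j]; ring
  have hSlog : S * Real.log S = A * Real.log S + B * Real.log S := by rw [hS]; ring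
  have core : ∑ i, eta (lam i) + ∑ i, eta (mu i) - ∑ i, eta (nu i)
      ≤ S * Real.log S - A * Real.log A - B * Real.log B := by linarith
  -- final arithmetic
  set N := ((Fintype.card n : ℕ) : ℝ) with hN
  have hN0 : 0 < N := by
    rw [hN]; exact_mod_cast Fintype.card_pos
  have htRx : tauR x = A / N := by
    rw [tauR, ← sum_eigenvalues_eq_trace_re hx.1, ← hlamdef, ← hAdef, hN]
  have htRy : tauR y = B / N := by
    rw [tauR, ← sum_eigenvalues_eq_trace_re hy.1, ← hmudef, ← hBdef, hN]
  have htRm : tauR (x + y) = S / N := by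
    rw [tauR, ← sum_eigenvalues_eq_trace_re hm.1, ← hnudef, ← hSdef, hN]
  have htEx : tauEta x = (∑ i, eta (lam i)) / N := by
    unfold tauEta; rw [dif_pos hx.1]
  have htEy : tauEta y = (∑ i, eta (mu i)) / N := by
    unfold tauEta; rw [dif_pos hy.1]
  have htEm : tauEta (x + y) = (∑ i, eta (nu i)) / N := by
    unfold tauEta; rw [dif_pos hm.1]
  rw [htRx, htRy, htRm, htEx, htEy, htEm,
    eta_div (le_of_lt hS0) hN0, eta_div (le_of_lt hA0) hN0, eta_div (le_of_lt hB0) hN0]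
  have final : S * Real.log N - S * Real.log S - ∑ i, eta (nu i)
      ≤ (A * Real.log N - A * Real.log A - ∑ i, eta (lam i))
        + (B * Real.log N - B * Real.log B - ∑ i, eta (mu i)) := by
    have hSlogN : S * Real.log N = A * Real.log N + B * Real.log N := by rw [hS]; ring
    linarith
  calc (S * Real.log N - S * Real.log S) / N - (∑ i, eta (nu i)) / N
      = (S * Real.log N - S * Real.log S - ∑ i, eta (nu i)) / N := by ring
    _ ≤ ((A * Real.log N - A * Real.log A - ∑ i, eta (lam i))
        + (B * Real.log N - B * Real.log B - ∑ i, eta (mu i))) / N := by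
        exact (div_le_div_iff_of_pos_right hN0).mpr final
    _ = (A * Real.log N - A * Real.log A) / N - (∑ i, eta (lam i)) / N
        + ((B * Real.log N - B * Real.log B) / N - (∑ i, eta (mu i)) / N) := by ring
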